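/- Let Λ_L = 4Lℤ × 2Lℤ × 2Lℤ and S(z) = (z₁² − z₂²)/|z|⁵. The lattice sum c(L) := fint_{Q_0} S(z) dz − Σ_{y ∈ Λ_L∖{0}} ( S(y) − fint_{Q_y} S(z) dz ), with Q_y = y + [−2L,2L]×[−L,L]², converges absolutely and satisfies the scaling relation c(L) = c(1/2) · (1/(2L))³ for every L > 0. In other words, L³ c(L) is independent of L. -/

import Mathlib

open MeasureTheory Real Set
open scoped BigOperators

noncomputable section

abbrev E3 := EuclideanSpace ℝ (Fin 3)

def S (z : E3) : ℝ := (z 0 ^ 2 - z 1 ^ 2) / ‖z‖ ^ 5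

/-- The lattice point of `Λ_L = 4Lℤ × 2Lℤ × 2Lℤ` indexed by `m`. -/
def lattL (L : ℝ) (m : ℤ × ℤ × ℤ) : E3 :=
  (WithLp.equiv 2 (Fin 3 → ℝ)).symm ![4 * L * (m.1 : ℝ), 2 * L * (m.2.1 : ℝ), 2 * L * (m.2.2 : ℝ)]

/-- The cell `Q_y = y + [−2L,2L] × [−L,L]²` (volume `16L³`). -/
def QL (L : ℝ) (y : E3) : Set E3 :=
  {z | z 0 ∈ Icc (y 0 - 2 * L) (y 0 + 2 * L) ∧ z 1 ∈ Icc (y 1 - L) (y 1 + L) ∧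
    z 2 ∈ Icc (y 2 - L) (y 2 + L)}

/-- The cell-corrected term `S(y) − fint_{Q_y} S`. -/
def termL (L : ℝ) (y : E3) : ℝ := S y - (1 / (16 * L ^ 3)) * ∫ z in QL L y, S z

/-- The lattice sum `c(L) = fint_{Q_0} S − Σ_{y ∈ Λ_L∖{0}} (S(y) − fint_{Q_y} S)`. -/
def cL (L : ℝ) : ℝ :=
  (1 / (16 * L ^ 3)) * (∫ z in QL L 0, S z)
    - ∑' m : {m : ℤ × ℤ × ℤ // m ≠ 0}, termL L (lattL L m.1)

open scoped Pointwise

lemma abs_coord_le (x : E3) (i : Fin 3) : |x i| ≤ ‖x‖ := by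
  rw [EuclideanSpace.norm_eq, ← Real.sqrt_sq_eq_abs]
  apply Real.sqrt_le_sqrt
  rw [Fin.sum_univ_three]
  fin_cases i <;> simp [Real.norm_eq_abs, sq_abs] <;>
    nlinarith [sq_nonneg (x 0), sq_nonneg (x 1), sq_nonneg (x 2)]

lemma norm_sub_QL {y z : E3} (hz : z ∈ QL (1/2) y) : ‖y - z‖ ≤ 3/2 := by
  obtain ⟨⟨h1, h2⟩, ⟨h3, h4⟩, h5, h6⟩ := hz
  rw [EuclideanSpace.norm_eq, Fin.sum_univ_three]
  have e : ∀ i : Fin 3, (y - z) i = y i - z i := fun i => rfl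
  rw [show ((3:ℝ)/2) = Real.sqrt ((3/2)^2) by rw [Real.sqrt_sq]; norm_num]
  apply Real.sqrt_le_sqrt
  simp only [e, Real.norm_eq_abs, sq_abs]
  nlinarith

lemma continuousOn_S : ContinuousOn S {z : E3 | z ≠ 0} := by
  apply ContinuousOn.div
  · have c0 : Continuous (fun z : E3 => z 0) := (EuclideanSpace.proj (𝕜 := ℝ) (0:Fin 3)).continuous
    have c1 : Continuous (fun z : E3 => z 1) := (EuclideanSpace.proj (𝕜 := ℝ) (1:Fin 3)).continuous
    exact ((c0.pow 2).sub (c1.pow 2)).continuousOn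
  · exact (continuous_norm.pow 5).continuousOn
  · intro z hz
    exact pow_ne_zero _ (norm_ne_zero_iff.mpr hz)

lemma QL_isCompact (y : E3) : IsCompact (QL (1/2) y) := by
  have hclosed : IsClosed (QL (1/2) y) := by
    have hm : ∀ i : Fin 3, Continuous (fun z : E3 => z i) := fun i =>
      (EuclideanSpace.proj (𝕜 := ℝ) i).continuous
    exact ((isClosed_Icc.preimage (hm 0)).inter
      ((isClosed_Icc.preimage (hm 1)).inter (isClosed_Icc.preimage (hm 2))))
  refine (isCompact_closedBall y (3/2)).of_isClosed_subset hclosed ?_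
  intro z hz
  rw [Metric.mem_closedBall, dist_eq_norm, ← norm_sub_rev]
  exact norm_sub_QL hz

lemma volume_QL (y : E3) : volume (QL (1/2) y) = 2 := by
  have he := EuclideanSpace.volume_preserving_symm_measurableEquiv_toLp (Fin 3)
  have hs : QL (1/2) y = (MeasurableEquiv.toLp 2 (Fin 3 → ℝ)).symm ⁻¹'
      (Icc ![y 0 - 1, y 1 - 1/2, y 2 - 1/2] ![y 0 + 1, y 1 + 1/2, y 2 + 1/2]) := by
    ext z
    simp only [QL, mem_setOf_eq, mem_preimage, mem_Icc, Pi.le_def, mem_Icc]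
    constructor
    · rintro ⟨⟨h1, h2⟩, ⟨h3, h4⟩, h5, h6⟩
      constructor <;> intro i <;> fin_cases i <;>
        simp only [Matrix.cons_val_zero, Matrix.cons_val_one, Matrix.head_cons,
          Matrix.cons_val_two, Matrix.tail_cons] <;>
        first
          | (show y 0 - 1 ≤ z 0; linarith)
          | (show y 1 - 1/2 ≤ z 1; linarith)
          | (show y 2 - 1/2 ≤ z 2; linarith)
          | (show z 0 ≤ y 0 + 1; linarith)
          | (show z 1 ≤ y 1 + 1/2; linarith)
          | (show z 2 ≤ y 2 + 1/2; linarith)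
    · rintro ⟨hlo, hhi⟩
      have l0 := hlo 0; have l1 := hlo 1; have l2 := hlo 2
      have u0 := hhi 0; have u1 := hhi 1; have u2 := hhi 2
      simp only [Matrix.cons_val_zero, Matrix.cons_val_one, Matrix.head_cons,
        Matrix.cons_val_two, Matrix.tail_cons] at l0 l1 l2 u0 u1 u2
      have hze : ∀ i : Fin 3, (MeasurableEquiv.toLp 2 (Fin 3 → ℝ)).symm z i = z i := fun _ => rfl
      rw [hze] at l0 u0; rw [hze] at l1 u1; rw [hze] at l2 u2
      refine ⟨⟨by norm_num; linarith, by norm_num; linarith⟩,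
        ⟨by norm_num; linarith, by norm_num; linarith⟩,
        by norm_num; linarith, by norm_num; linarith⟩
  rw [hs, he.measure_preimage measurableSet_Icc.nullMeasurableSet]
  rw [Real.volume_Icc_pi, Fin.prod_univ_three]
  simp only [Matrix.cons_val_zero, Matrix.cons_val_one, Matrix.head_cons,
    Matrix.cons_val_two, Matrix.tail_cons]
  rw [show y 0 + 1 - (y 0 - 1) = (2:ℝ) by ring, show y 1 + 1/2 - (y 1 - 1/2) = (1:ℝ) by ring,
    show y 2 + 1/2 - (y 2 - 1/2) = (1:ℝ) by ring]
  simp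

lemma S_le {z : E3} (hz : z ≠ 0) : |S z| ≤ 1 / ‖z‖ ^ 3 := by
  have h : (0:ℝ) < ‖z‖ := norm_pos_iff.mpr hz
  have h0 := abs_coord_le z 0
  have h1 := abs_coord_le z 1
  have hnum : |z 0 ^ 2 - z 1 ^ 2| ≤ ‖z‖ ^ 2 := by
    rw [abs_le]
    constructor <;> nlinarith [sq_abs (z 0), sq_abs (z 1), abs_nonneg (z 0), abs_nonneg (z 1)]
  unfold S
  rw [abs_div, abs_of_pos (pow_pos h 5), div_le_div_iff₀ (pow_pos h 5) (pow_pos h 3)]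
  nlinarith [pow_pos h 3, pow_pos h 5, mul_le_mul_of_nonneg_right hnum (le_of_lt (pow_pos h 3))]

set_option maxHeartbeats 1000000 in
lemma S_diff_bound {y z : E3} (ha : 3 ≤ ‖y‖) (hd : ‖y - z‖ ≤ 3/2) :
    |S y - S z| ≤ 4128 / ‖y‖ ^ 4 := by
  set a := ‖y‖ with ha'
  set b := ‖z‖ with hb'
  have ha0 : (0:ℝ) < a := by linarith
  have habs : |a - b| ≤ 3/2 := (abs_norm_sub_norm_le y z).trans hd
  have hab := abs_le.mp habs
  have hb1 : a / 2 ≤ b := by linarith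
  have hb2 : b ≤ 2 * a := by linarith
  have hb0 : (0:ℝ) < b := by linarith
  have hy0 : |y 0| ≤ a := abs_coord_le y 0
  have hy1 : |y 1| ≤ a := abs_coord_le y 1
  have hz0 : |z 0| ≤ b := abs_coord_le z 0
  have hz1 : |z 1| ≤ b := abs_coord_le z 1
  have hd0 : |y 0 - z 0| ≤ 3/2 := by
    have : (y - z) 0 = y 0 - z 0 := rfl
    rw [← this]; exact (abs_coord_le (y - z) 0).trans hd
  have hd1 : |y 1 - z 1| ≤ 3/2 := by
    have : (y - z) 1 = y 1 - z 1 := rfl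
    rw [← this]; exact (abs_coord_le (y - z) 1).trans hd
  -- bound |f y| ≤ a^2
  have hfy : |y 0 ^ 2 - y 1 ^ 2| ≤ a ^ 2 := by
    rw [abs_le]
    constructor <;> nlinarith [sq_abs (y 0), sq_abs (y 1), abs_nonneg (y 0), abs_nonneg (y 1)]
  -- bound |b^5 - a^5| ≤ 120 a^4
  have hpow : |b ^ 5 - a ^ 5| ≤ 120 * a ^ 4 := by
    have hfac : b ^ 5 - a ^ 5 = (b - a) * (b^4 + b^3*a + b^2*a^2 + b*a^3 + a^4) := by ring
    rw [hfac, abs_mul]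
    have hp : |b^4 + b^3*a + b^2*a^2 + b*a^3 + a^4| ≤ 80 * a ^ 4 := by
      rw [abs_of_nonneg (by positivity)]
      nlinarith [pow_le_pow_left₀ hb0.le hb2 4, pow_le_pow_left₀ hb0.le hb2 3,
        pow_le_pow_left₀ hb0.le hb2 2, sq_nonneg a, sq_nonneg b, mul_pos ha0 hb0]
    have hba : |b - a| ≤ 3/2 := by rw [abs_sub_comm]; exact habs
    calc |b - a| * |b^4 + b^3*a + b^2*a^2 + b*a^3 + a^4| ≤ (3/2) * (80 * a^4) := by
          apply mul_le_mul hba hp (abs_nonneg _) (by norm_num)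
      _ = 120 * a ^ 4 := by ring
  -- bound |f y - f z| ≤ 9 a
  have hdf : |(y 0 ^ 2 - y 1 ^ 2) - (z 0 ^ 2 - z 1 ^ 2)| ≤ 9 * a := by
    have e0 : y 0 ^ 2 - z 0 ^ 2 = (y 0 - z 0) * (y 0 + z 0) := by ring
    have e1 : y 1 ^ 2 - z 1 ^ 2 = (y 1 - z 1) * (y 1 + z 1) := by ring
    have b0 : |y 0 ^ 2 - z 0 ^ 2| ≤ (3/2) * (3 * a) := by
      rw [e0, abs_mul]
      apply mul_le_mul hd0 _ (abs_nonneg _) (by norm_num)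
      calc |y 0 + z 0| ≤ |y 0| + |z 0| := abs_add_le _ _
        _ ≤ 3 * a := by linarith
    have b1 : |y 1 ^ 2 - z 1 ^ 2| ≤ (3/2) * (3 * a) := by
      rw [e1, abs_mul]
      apply mul_le_mul hd1 _ (abs_nonneg _) (by norm_num)
      calc |y 1 + z 1| ≤ |y 1| + |z 1| := abs_add_le _ _
        _ ≤ 3 * a := by linarith
    calc |(y 0 ^ 2 - y 1 ^ 2) - (z 0 ^ 2 - z 1 ^ 2)|
        = |(y 0 ^ 2 - z 0 ^ 2) - (y 1 ^ 2 - z 1 ^ 2)| := by congr 1; ring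
      _ ≤ |y 0 ^ 2 - z 0 ^ 2| + |y 1 ^ 2 - z 1 ^ 2| := abs_sub _ _
      _ ≤ 9 * a := by linarith
  -- rewrite S y - S z
  have hrw : S y - S z =
      ((y 0 ^ 2 - y 1 ^ 2) * (b ^ 5 - a ^ 5) +
        ((y 0 ^ 2 - y 1 ^ 2) - (z 0 ^ 2 - z 1 ^ 2)) * a ^ 5) / (a ^ 5 * b ^ 5) := by
    unfold S
    rw [← ha', ← hb']
    field_simp
    ring
  rw [hrw, abs_div, abs_of_pos (by positivity : (0:ℝ) < a ^ 5 * b ^ 5)]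
  have hnum : |(y 0 ^ 2 - y 1 ^ 2) * (b ^ 5 - a ^ 5) +
      ((y 0 ^ 2 - y 1 ^ 2) - (z 0 ^ 2 - z 1 ^ 2)) * a ^ 5| ≤ 129 * a ^ 6 := by
    calc |(y 0 ^ 2 - y 1 ^ 2) * (b ^ 5 - a ^ 5) +
        ((y 0 ^ 2 - y 1 ^ 2) - (z 0 ^ 2 - z 1 ^ 2)) * a ^ 5|
        ≤ |(y 0 ^ 2 - y 1 ^ 2) * (b ^ 5 - a ^ 5)| +
          |((y 0 ^ 2 - y 1 ^ 2) - (z 0 ^ 2 - z 1 ^ 2)) * a ^ 5| := abs_add_le _ _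
      _ = |y 0 ^ 2 - y 1 ^ 2| * |b ^ 5 - a ^ 5| +
          |(y 0 ^ 2 - y 1 ^ 2) - (z 0 ^ 2 - z 1 ^ 2)| * |a ^ 5| := by rw [abs_mul, abs_mul]
      _ ≤ a ^ 2 * (120 * a ^ 4) + (9 * a) * a ^ 5 := by
          rw [abs_of_pos (by positivity : (0:ℝ) < a ^ 5)]
          apply add_le_add
          · exact mul_le_mul hfy hpow (abs_nonneg _) (by positivity)
          · exact mul_le_mul_of_nonneg_right hdf (by positivity)
      _ = 129 * a ^ 6 := by ring
  have hden : a ^ 10 / 32 ≤ a ^ 5 * b ^ 5 := by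
    have := pow_le_pow_left₀ (by positivity : (0:ℝ) ≤ a / 2) hb1 5
    calc a ^ 10 / 32 = a ^ 5 * (a/2) ^ 5 := by ring
      _ ≤ a ^ 5 * b ^ 5 := by
          apply mul_le_mul_of_nonneg_left this (by positivity)
  rw [div_le_div_iff₀ (by positivity) (by positivity)]
  nlinarith [mul_le_mul_of_nonneg_right hnum (by positivity : (0:ℝ) ≤ a ^ 4),
    mul_le_mul_of_nonneg_left hden (by norm_num : (0:ℝ) ≤ 4128), pow_pos ha0 10]

lemma E3_smul_apply (c : ℝ) (y : E3) (i : Fin 3) : (c • y) i = c * y i := rfl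

lemma S_smul {c : ℝ} (hc : 0 < c) (z : E3) : S (c • z) = (c ^ 3)⁻¹ * S z := by
  rcases eq_or_ne z 0 with rfl | hz
  · simp [S]
  · have hz' : (0:ℝ) < ‖z‖ := norm_pos_iff.mpr hz
    unfold S
    rw [E3_smul_apply, E3_smul_apply, norm_smul, Real.norm_eq_abs, abs_of_pos hc]
    rw [mul_pow]
    field_simp

lemma QL_smul {c : ℝ} (hc : 0 < c) (L : ℝ) (y : E3) : QL (c * L) (c • y) = c • QL L y := by
  ext z
  have hiff : ∀ a b : ℝ, (a ≤ c⁻¹ * b ↔ c * a ≤ b) := fun a b => by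
    rw [le_inv_mul_iff₀ hc]
  have hiff2 : ∀ a b : ℝ, (c⁻¹ * a ≤ b ↔ a ≤ c * b) := fun a b => by
    rw [inv_mul_le_iff₀ hc]
  simp only [QL, mem_setOf_eq, Set.mem_smul_set_iff_inv_smul_mem₀ hc.ne', E3_smul_apply,
    mem_Icc, hiff, hiff2]
  constructor <;> rintro ⟨⟨h1, h2⟩, ⟨h3, h4⟩, h5, h6⟩ <;>
    exact ⟨⟨by linarith, by linarith⟩, ⟨by linarith, by linarith⟩, by linarith, by linarith⟩

lemma QL_measurableSet (L : ℝ) (y : E3) : MeasurableSet (QL L y) := by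
  have : QL L y = (fun z : E3 => z 0) ⁻¹' (Icc (y 0 - 2*L) (y 0 + 2*L)) ∩
      ((fun z : E3 => z 1) ⁻¹' (Icc (y 1 - L) (y 1 + L)) ∩
       (fun z : E3 => z 2) ⁻¹' (Icc (y 2 - L) (y 2 + L))) := rfl
  rw [this]
  have hm : ∀ i : Fin 3, Measurable (fun z : E3 => z i) := fun i =>
    (EuclideanSpace.proj (𝕜 := ℝ) i).continuous.measurable
  exact ((hm 0 measurableSet_Icc)).inter (((hm 1) measurableSet_Icc).inter ((hm 2) measurableSet_Icc))

lemma integral_QL_smul {c : ℝ} (hc : 0 < c) (L : ℝ) (y : E3) :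
    ∫ z in QL (c * L) (c • y), S z = ∫ z in QL L y, S z := by
  rw [QL_smul hc]
  have h := MeasureTheory.Measure.setIntegral_comp_smul_of_pos (volume : Measure E3) S (QL L y) hc
  rw [finrank_euclideanSpace_fin] at h
  have h2 : ∫ x in QL L y, S (c • x) = (c ^ 3)⁻¹ * ∫ x in QL L y, S x := by
    simp_rw [S_smul hc]
    exact integral_const_mul _ _
  rw [h2] at h
  rw [smul_eq_mul] at h
  have hc3 : ((c:ℝ) ^ 3)⁻¹ ≠ 0 := by positivity
  exact (mul_left_cancel₀ hc3 h).symm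

lemma lattL_eq (L : ℝ) (m : ℤ × ℤ × ℤ) : lattL L m = (2 * L) • lattL (1/2) m := by
  ext i
  fin_cases i <;> simp [lattL, E3_smul_apply] <;> ring

lemma termL_smul {c : ℝ} (hc : 0 < c) {L : ℝ} (hL : 0 < L) (y : E3) :
    termL (c * L) (c • y) = (c ^ 3)⁻¹ * termL L y := by
  unfold termL
  rw [S_smul hc, integral_QL_smul hc]
  have hc0 : c ≠ 0 := hc.ne'
  have hL0 : L ≠ 0 := hL.ne'
  field_simp

lemma termL_L {L : ℝ} (hL : 0 < L) (m : ℤ × ℤ × ℤ) :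
    termL L (lattL L m) = ((2*L) ^ 3)⁻¹ * termL (1/2) (lattL (1/2) m) := by
  have h : L = (2*L) * (1/2) := by ring
  rw [lattL_eq]
  calc termL L ((2*L) • lattL (1/2) m) = termL ((2*L)*(1/2)) ((2*L) • lattL (1/2) m) := by
        rw [← h]
    _ = ((2*L) ^ 3)⁻¹ * termL (1/2) (lattL (1/2) m) := termL_smul (by linarith) (by norm_num) _

lemma cL_scale {L : ℝ} (hL : 0 < L) : cL L = cL (1/2) * (1 / (2 * L)) ^ 3 := by
  have hc : (0:ℝ) < 2 * L := by linarith
  unfold cL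
  have h0 : (QL L 0 : Set E3) = QL ((2*L) * (1/2)) ((2*L) • (0:E3)) := by
    rw [smul_zero]; congr 1; ring
  have h1 : ∫ z in QL L 0, S z = ∫ z in QL (1/2) (0:E3), S z := by
    rw [h0, integral_QL_smul hc]
  rw [h1]
  have h2 : ∀ m : {m : ℤ × ℤ × ℤ // m ≠ 0}, termL L (lattL L m.1)
      = ((2*L) ^ 3)⁻¹ * termL (1/2) (lattL (1/2) m.1) := fun m => termL_L hL m.1
  rw [tsum_congr h2, tsum_mul_left]
  have hL0 : L ≠ 0 := hL.ne'
  field_simp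

lemma half_simp (y : E3) : termL (1/2) y = S y - (1/2) * ∫ z in QL (1/2) y, S z := by
  unfold termL; norm_num

lemma integrableOn_S {y : E3} (h : ∀ z ∈ QL (1/2) y, z ≠ 0) :
    IntegrableOn S (QL (1/2) y) := by
  exact (continuousOn_S.mono h).integrableOn_compact (QL_isCompact y)

lemma vol_facts (y : E3) : (volume (QL (1/2) y)).toReal = 2 ∧ volume (QL (1/2) y) < ⊤ := by
  rw [volume_QL]
  constructor
  · simp
  · norm_num

lemma termL_est {y : E3} {C : ℝ} (h0 : ∀ z ∈ QL (1/2) y, z ≠ 0)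
    (hC : ∀ z ∈ QL (1/2) y, |S y - S z| ≤ C) : |termL (1/2) y| ≤ C := by
  obtain ⟨hvR, hvfin⟩ := vol_facts y
  have hint := integrableOn_S h0
  have hconst : IntegrableOn (fun _ : E3 => S y) (QL (1/2) y) := by
    apply (integrableOn_const_iff enorm_ne_top).mpr; right; exact hvfin
  have key : termL (1/2) y = (1/2) * ∫ z in QL (1/2) y, (S y - S z) := by
    rw [half_simp, integral_sub hconst hint, setIntegral_const, measureReal_def, hvR]
    simp; ring
  rw [key]
  have hb := norm_setIntegral_le_of_norm_le_const (μ := volume) (s := QL (1/2) y)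
    (f := fun z => S y - S z) (C := C) hvfin
    (fun z hz => by rw [Real.norm_eq_abs]; exact hC z hz)
  rw [measureReal_def, hvR] at hb
  rw [abs_mul, abs_of_pos (by norm_num : (0:ℝ) < 1/2)]
  calc (1/2) * |∫ z in QL (1/2) y, (S y - S z)| ≤ (1/2) * (C * 2) := by
        apply mul_le_mul_of_nonneg_left _ (by norm_num)
        exact hb
    _ = C := by ring

lemma termL_far {y : E3} (hy : 3 ≤ ‖y‖) : |termL (1/2) y| ≤ 4128 / ‖y‖ ^ 4 := by
  have h0 : ∀ z ∈ QL (1/2) y, z ≠ 0 := by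
    intro z hz h
    subst h
    have := norm_sub_QL hz
    simp at this
    linarith
  exact termL_est h0 (fun z hz => S_diff_bound hy (norm_sub_QL hz))

lemma termL_near {y : E3} (hy : 1 ≤ ‖y‖) (hQ : ∀ z ∈ QL (1/2) y, (1:ℝ)/2 ≤ ‖z‖) :
    |termL (1/2) y| ≤ 9 := by
  have h0 : ∀ z ∈ QL (1/2) y, z ≠ 0 := by
    intro z hz h
    have := hQ z hz
    rw [h] at this; simp at this; linarith
  apply termL_est h0
  intro z hz
  have hz2 := hQ z hz
  have hy0 : y ≠ 0 := by intro h; rw [h] at hy; simp at hy; linarith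
  have h1 : |S y| ≤ 1 := by
    calc |S y| ≤ 1 / ‖y‖ ^ 3 := S_le hy0
      _ ≤ 1 := by
          rw [div_le_one (by positivity)]
          calc (1:ℝ) = 1 ^ 3 := by norm_num
            _ ≤ ‖y‖ ^ 3 := by apply pow_le_pow_left₀ <;> norm_num <;> exact hy
  have h2 : |S z| ≤ 8 := by
    calc |S z| ≤ 1 / ‖z‖ ^ 3 := S_le (h0 z hz)
      _ ≤ 8 := by
          rw [div_le_iff₀ (by positivity)]
          nlinarith [pow_le_pow_left₀ (by norm_num : (0:ℝ) ≤ 1/2) hz2 3]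
  calc |S y - S z| ≤ |S y| + |S z| := abs_sub _ _
    _ ≤ 9 := by linarith

lemma lattL_half_apply (m : ℤ × ℤ × ℤ) :
    lattL (1/2) m 0 = 2 * m.1 ∧ lattL (1/2) m 1 = m.2.1 ∧ lattL (1/2) m 2 = m.2.2 := by
  refine ⟨?_, ?_, ?_⟩ <;>
    simp only [lattL, WithLp.equiv_symm_apply, WithLp.ofLp_toLp, Matrix.cons_val_zero, Matrix.cons_val_one,
      Matrix.head_cons, Matrix.cons_val_two, Matrix.tail_cons] <;> ring

lemma norm_latt_sq (m : ℤ × ℤ × ℤ) :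
    ‖lattL (1/2) m‖ ^ 2 = 4 * (m.1:ℝ)^2 + (m.2.1:ℝ)^2 + (m.2.2:ℝ)^2 := by
  rw [EuclideanSpace.norm_eq, Real.sq_sqrt (by positivity), Fin.sum_univ_three]
  obtain ⟨e0, e1, e2⟩ := lattL_half_apply m
  rw [e0, e1, e2]
  simp only [Real.norm_eq_abs, sq_abs]
  ring

lemma abs_lower {a t w : ℝ} (h1 : a - w ≤ t) (h2 : t ≤ a + w) : |a| - w ≤ |t| := by
  have h3 : |a - t| ≤ w := abs_le.mpr ⟨by linarith, by linarith⟩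
  have h4 : |a| ≤ |t| + |a - t| := by
    calc |a| = |t + (a - t)| := by ring_nf
      _ ≤ |t| + |a - t| := abs_add_le _ _
  linarith

lemma latt_ne_conds {m : ℤ × ℤ × ℤ} (hm : m ≠ 0) :
    ¬(m.1 = 0 ∧ m.2.1 = 0 ∧ m.2.2 = 0) := by
  intro ⟨h1, h2, h3⟩
  exact hm (by ext <;> simp [h1, h2, h3])

lemma norm_latt_ge_one {m : ℤ × ℤ × ℤ} (hm : m ≠ 0) : 1 ≤ ‖lattL (1/2) m‖ := by
  have h := norm_latt_sq m
  have hc := latt_ne_conds hm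
  have key : (1:ℝ) ≤ 4 * (m.1:ℝ)^2 + (m.2.1:ℝ)^2 + (m.2.2:ℝ)^2 := by
    push_neg at hc
    by_cases h1 : m.1 = 0
    · by_cases h2 : m.2.1 = 0
      · have h3 := hc h1 h2
        have : (1:ℝ) ≤ (m.2.2:ℝ)^2 := by
          have := Int.one_le_abs h3
          have : (1:ℝ) ≤ |(m.2.2:ℝ)| := by exact_mod_cast this
          nlinarith [sq_abs (m.2.2:ℝ)]
        nlinarith [sq_nonneg (m.1:ℝ), sq_nonneg (m.2.1:ℝ)]
      · have : (1:ℝ) ≤ (m.2.1:ℝ)^2 := by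
          have := Int.one_le_abs h2
          have : (1:ℝ) ≤ |(m.2.1:ℝ)| := by exact_mod_cast this
          nlinarith [sq_abs (m.2.1:ℝ)]
        nlinarith [sq_nonneg (m.1:ℝ), sq_nonneg (m.2.2:ℝ)]
    · have : (1:ℝ) ≤ (m.1:ℝ)^2 := by
        have := Int.one_le_abs h1
        have : (1:ℝ) ≤ |(m.1:ℝ)| := by exact_mod_cast this
        nlinarith [sq_abs (m.1:ℝ)]
      nlinarith [sq_nonneg (m.2.1:ℝ), sq_nonneg (m.2.2:ℝ)]
  nlinarith [norm_nonneg (lattL (1/2) m), h, key]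

lemma QL_norm_half {m : ℤ × ℤ × ℤ} (hm : m ≠ 0) :
    ∀ z ∈ QL (1/2) (lattL (1/2) m), (1:ℝ)/2 ≤ ‖z‖ := by
  intro z hz
  set y := lattL (1/2) m with hy
  obtain ⟨⟨h1, h2⟩, ⟨h3, h4⟩, h5, h6⟩ := hz
  obtain ⟨e0, e1, e2⟩ := lattL_half_apply m
  norm_num at h1 h2 h3 h4 h5 h6
  have hc := latt_ne_conds hm
  push_neg at hc
  by_cases hm1 : m.1 = 0
  · by_cases hm2 : m.2.1 = 0
    · have hm3 := hc hm1 hm2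
      have hab : (1:ℝ) ≤ |y 2| := by
        rw [← hy] at e2
        rw [e2]
        have h' : (1:ℝ) ≤ |(m.2.2:ℝ)| := by exact_mod_cast Int.one_le_abs hm3
        exact h'
      have := abs_lower (w := 1/2) (by linarith : y 2 - 1/2 ≤ z 2) (by linarith)
      calc (1:ℝ)/2 ≤ |z 2| := by linarith
        _ ≤ ‖z‖ := abs_coord_le z 2
    · have hab : (1:ℝ) ≤ |y 1| := by
        rw [← hy] at e1
        rw [e1]
        have h' : (1:ℝ) ≤ |(m.2.1:ℝ)| := by exact_mod_cast Int.one_le_abs hm2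
        exact h'
      have := abs_lower (w := 1/2) (by linarith : y 1 - 1/2 ≤ z 1) (by linarith)
      calc (1:ℝ)/2 ≤ |z 1| := by linarith
        _ ≤ ‖z‖ := abs_coord_le z 1
  · have hab : (2:ℝ) ≤ |y 0| := by
      rw [← hy] at e0
      rw [e0, abs_mul]
      have : (1:ℝ) ≤ |(m.1:ℝ)| := by exact_mod_cast Int.one_le_abs hm1
      rw [abs_of_pos (by norm_num : (0:ℝ) < 2)]
      linarith
    have := abs_lower (w := 1) (by linarith : y 0 - 1 ≤ z 0) (by linarith)
    calc (1:ℝ)/2 ≤ |z 0| := by linarith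
      _ ≤ ‖z‖ := abs_coord_le z 0

def Nm (m : ℤ × ℤ × ℤ) : ℝ := |(m.1:ℝ)| + |(m.2.1:ℝ)| + |(m.2.2:ℝ)|

lemma Nm_nonneg (m : ℤ × ℤ × ℤ) : 0 ≤ Nm m := by
  unfold Nm; positivity

lemma one_le_Nm {m : ℤ × ℤ × ℤ} (hm : m ≠ 0) : 1 ≤ Nm m := by
  have hc := latt_ne_conds hm
  push_neg at hc
  unfold Nm
  by_cases h1 : m.1 = 0
  · by_cases h2 : m.2.1 = 0
    · have h3 := hc h1 h2
      have : (1:ℝ) ≤ |(m.2.2:ℝ)| := by exact_mod_cast Int.one_le_abs h3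
      have a1 := abs_nonneg (m.1:ℝ); have a2 := abs_nonneg (m.2.1:ℝ)
      linarith
    · have : (1:ℝ) ≤ |(m.2.1:ℝ)| := by exact_mod_cast Int.one_le_abs h2
      have a1 := abs_nonneg (m.1:ℝ); have a2 := abs_nonneg (m.2.2:ℝ)
      linarith
  · have : (1:ℝ) ≤ |(m.1:ℝ)| := by exact_mod_cast Int.one_le_abs h1
    have a1 := abs_nonneg (m.2.1:ℝ); have a2 := abs_nonneg (m.2.2:ℝ)
    linarith

lemma termL_bound {m : ℤ × ℤ × ℤ} (hm : m ≠ 0) :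
    |termL (1/2) (lattL (1/2) m)| ≤ 594432 / (1 + Nm m) ^ 4 := by
  have ha1 : 1 ≤ ‖lattL (1/2) m‖ := norm_latt_ge_one hm
  have hsq := norm_latt_sq m
  have hN1 := one_le_Nm hm
  set a := ‖lattL (1/2) m‖ with ha'
  set N := Nm m with hN'
  have ha0 : (0:ℝ) < a := by linarith
  by_cases h3 : 3 ≤ a
  · refine (termL_far h3).trans ?_
    rw [div_le_div_iff₀ (by positivity) (by positivity)]
    have hN2 : N ^ 2 ≤ 3 * a ^ 2 := by
      have e : N = |(m.1:ℝ)| + |(m.2.1:ℝ)| + |(m.2.2:ℝ)| := rfl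
      rw [e]
      nlinarith [sq_nonneg (|(m.1:ℝ)| - |(m.2.1:ℝ)|), sq_nonneg (|(m.1:ℝ)| - |(m.2.2:ℝ)|),
        sq_nonneg (|(m.2.1:ℝ)| - |(m.2.2:ℝ)|), sq_abs (m.1:ℝ), sq_abs (m.2.1:ℝ),
        sq_abs (m.2.2:ℝ), sq_nonneg (m.1:ℝ), hsq]
    have h4 : (1 + N) ^ 2 ≤ 4 * N ^ 2 := by nlinarith
    have h5 := mul_le_mul h4 h4 (by positivity) (by positivity)
    have h6 := mul_le_mul hN2 hN2 (by positivity) (by positivity)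
    nlinarith [h5, h6]
  · push_neg at h3
    refine (termL_near ha1 (QL_norm_half hm)).trans ?_
    have h9 : 4 * (m.1:ℝ)^2 + (m.2.1:ℝ)^2 + (m.2.2:ℝ)^2 < 9 := by nlinarith
    have hm1 : |(m.1:ℝ)| ≤ 1 := by
      have hk : m.1 ^ 2 ≤ 2 := by
        by_contra h
        push_neg at h
        have : (3:ℝ) ≤ (m.1:ℝ)^2 := by exact_mod_cast h
        nlinarith [sq_nonneg (m.2.1:ℝ), sq_nonneg (m.2.2:ℝ)]
      have : |m.1| ≤ 1 := by nlinarith [sq_abs m.1, abs_nonneg m.1]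
      exact_mod_cast this
    have hm2 : |(m.2.1:ℝ)| ≤ 2 := by
      have hk : m.2.1 ^ 2 ≤ 8 := by
        by_contra h
        push_neg at h
        have : (9:ℝ) ≤ (m.2.1:ℝ)^2 := by exact_mod_cast h
        nlinarith [sq_nonneg (m.2.2:ℝ), sq_nonneg (m.1:ℝ)]
      have : |m.2.1| ≤ 2 := by nlinarith [sq_abs m.2.1, abs_nonneg m.2.1]
      exact_mod_cast this
    have hm3 : |(m.2.2:ℝ)| ≤ 2 := by
      have hk : m.2.2 ^ 2 ≤ 8 := by
        by_contra h
        push_neg at h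
        have : (9:ℝ) ≤ (m.2.2:ℝ)^2 := by exact_mod_cast h
        nlinarith [sq_nonneg (m.2.1:ℝ), sq_nonneg (m.1:ℝ)]
      have : |m.2.2| ≤ 2 := by nlinarith [sq_abs m.2.2, abs_nonneg m.2.2]
      exact_mod_cast this
    have hN5 : N ≤ 5 := by
      have e : N = |(m.1:ℝ)| + |(m.2.1:ℝ)| + |(m.2.2:ℝ)| := rfl
      rw [e]; linarith
    rw [le_div_iff₀ (by positivity)]
    have : (1 + N) ^ 4 ≤ 6 ^ 4 := pow_le_pow_left₀ (by positivity) (by linarith) 4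
    nlinarith [this]

def g1 (n : ℤ) : ℝ := (1 + |(n:ℝ)|) ^ (-(4/3) : ℝ)

lemma g1_nonneg (n : ℤ) : 0 ≤ g1 n := by
  unfold g1
  positivity

lemma summable_g1 : Summable g1 := by
  have hnat : Summable (fun n : ℕ => ((1:ℝ) + n) ^ (-(4/3) : ℝ)) := by
    have h0 : Summable (fun n : ℕ => (n:ℝ) ^ (-(4/3) : ℝ)) :=
      Real.summable_nat_rpow.mpr (by norm_num)
    have h1 := (summable_nat_add_iff 1).mpr h0
    apply h1.congr
    intro n
    push_cast
    rw [add_comm]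
  apply Summable.of_nat_of_neg <;> apply hnat.congr <;> intro n <;>
    simp [g1, abs_of_nonneg (by positivity : (0:ℝ) ≤ (n:ℝ))]

lemma summable_g3 : Summable (fun m : ℤ × ℤ × ℤ => g1 m.1 * (g1 m.2.1 * g1 m.2.2)) := by
  have h2 : Summable (fun p : ℤ × ℤ => g1 p.1 * g1 p.2) :=
    summable_g1.mul_of_nonneg summable_g1 g1_nonneg g1_nonneg
  exact summable_g1.mul_of_nonneg h2 g1_nonneg (fun p => mul_nonneg (g1_nonneg _) (g1_nonneg _))

lemma inv_le_g3 (m : ℤ × ℤ × ℤ) :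
    1 / (1 + Nm m) ^ 4 ≤ g1 m.1 * (g1 m.2.1 * g1 m.2.2) := by
  set A := |(m.1:ℝ)| with hA
  set B := |(m.2.1:ℝ)| with hB
  set C := |(m.2.2:ℝ)| with hC
  have hA0 : 0 ≤ A := abs_nonneg _
  have hB0 : 0 ≤ B := abs_nonneg _
  have hC0 : 0 ≤ C := abs_nonneg _
  have hNm : Nm m = A + B + C := rfl
  have hprod : g1 m.1 * (g1 m.2.1 * g1 m.2.2)
      = ((1 + A) * ((1 + B) * (1 + C))) ^ (-(4/3) : ℝ) := by
    unfold g1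
    rw [Real.mul_rpow (by positivity) (by positivity),
      Real.mul_rpow (by positivity) (by positivity)]
  rw [hprod, hNm]
  have hP : (1 + A) * ((1 + B) * (1 + C)) ≤ (1 + (A + B + C)) ^ 3 := by
    nlinarith [mul_nonneg hA0 hB0, mul_nonneg hA0 hC0, mul_nonneg hB0 hC0,
      mul_nonneg (mul_nonneg hA0 hB0) hC0, sq_nonneg A, sq_nonneg B, sq_nonneg C,
      mul_nonneg (mul_nonneg hA0 hA0) hB0, mul_nonneg (mul_nonneg hA0 hA0) hC0,
      mul_nonneg (mul_nonneg hB0 hB0) hA0, mul_nonneg (mul_nonneg hB0 hB0) hC0,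
      mul_nonneg (mul_nonneg hC0 hC0) hA0, mul_nonneg (mul_nonneg hC0 hC0) hB0]
  have he : (((1 + (A + B + C)) ^ (3:ℕ) : ℝ)) ^ ((4:ℝ)/3) = (1 + (A + B + C)) ^ (4:ℕ) := by
    rw [← Real.rpow_natCast (1 + (A + B + C)) 3, ← Real.rpow_mul (by positivity)]
    norm_num
  have hPle : ((1 + A) * ((1 + B) * (1 + C))) ^ ((4:ℝ)/3) ≤ (1 + (A + B + C)) ^ (4:ℕ) := by
    rw [← he]
    exact Real.rpow_le_rpow (by positivity) hP (by norm_num)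
  rw [Real.rpow_neg (by positivity), ← one_div]
  apply one_div_le_one_div_of_le (by positivity)
  exact hPle

lemma summable_half :
    Summable (fun m : {m : ℤ × ℤ × ℤ // m ≠ 0} => |termL (1/2) (lattL (1/2) m.1)|) := by
  have hmaj : Summable (fun m : ℤ × ℤ × ℤ => 594432 * (g1 m.1 * (g1 m.2.1 * g1 m.2.2))) :=
    summable_g3.mul_left _
  have hsub := hmaj.subtype {m : ℤ × ℤ × ℤ | m ≠ 0}
  apply Summable.of_nonneg_of_le (fun _ => abs_nonneg _) _ hsub
  intro m
  refine (termL_bound m.2).trans ?_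
  have := inv_le_g3 m.1
  calc (594432:ℝ) / (1 + Nm m.1) ^ 4 = 594432 * (1 / (1 + Nm m.1) ^ 4) := by ring
    _ ≤ 594432 * (g1 m.1.1 * (g1 m.1.2.1 * g1 m.1.2.2)) := by
        apply mul_le_mul_of_nonneg_left this (by norm_num)


/-- the lattice sum `c(L)` converges absolutely for every `L > 0` and
satisfies the scaling relation `c(L) = c(1/2)·(1/(2L))³`, i.e. `L³c(L)` is constant. -/
theorem stmt9 :
    (∀ L > (0:ℝ), Summable (fun m : {m : ℤ × ℤ × ℤ // m ≠ 0} => |termL L (lattL L m.1)|)) ∧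
    (∀ L > (0:ℝ), cL L = cL (1/2) * (1 / (2 * L)) ^ 3) := by
  constructor
  · intro L hL
    have h2L : (0:ℝ) < 2 * L := by linarith
    have h : ∀ m : {m : ℤ × ℤ × ℤ // m ≠ 0},
        |termL L (lattL L m.1)| = ((2*L)^3)⁻¹ * |termL (1/2) (lattL (1/2) m.1)| := by
      intro m
      rw [termL_L hL, abs_mul, abs_of_pos (inv_pos.mpr (pow_pos h2L 3))]
    exact Summable.congr (summable_half.mul_left ((2*L)^3)⁻¹) (fun m => (h m).symm)
  · intro L hL
    exact cL_scale hL
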